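/- Let φ be a pair potential, let a > 0, and let b ≥ 0 and v₀ ≥ 0 be real numbers such that φ⁺(|x−y|) ≥ b whenever x ≠ y lie in one common cube of the partition Δ̄_a, and such that Σ_{Δ'∈Δ̄_a} sup_{y∈Δ'} φ⁻(|x−y|) ≤ v₀ for every x ∈ ℝ^d. Then every finite configuration γ ⊂ ℝ^d satisfies U(γ) ≥ (b/4 − v₀/2) · Σ_{Δ∈Δ̄_a : |γ_Δ|≥2} |γ_Δ|² − (v₀/2)·|γ|. -/

import Mathlib

open MeasureTheory Filter Topology Set
open scoped BigOperators ENNReal NNReal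

noncomputable section

attribute [local instance] Classical.propDecidable

/-- Points of `ℝ^d` (Euclidean space). -/
abbrev Pt (d : ℕ) : Type := EuclideanSpace ℝ (Fin d)

/-- The index `r ∈ ℤ^d` of the cube `Δ_a(r)` of the partition `Δ̄_a` containing `x`:
for `a > 0` we have `cubeIdx d a x = r ↔ ∀ i, a*(r i - 1/2) ≤ x i ∧ x i < a*(r i + 1/2)`. -/
def cubeIdx (d : ℕ) (a : ℝ) (x : Pt d) : Fin d → ℤ := fun i => ⌊x i / a + 1/2⌋

/-- `φ⁺(t) = max {0, φ(t)}`. -/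
def phiPlus (φ : ℝ → ℝ) (t : ℝ) : ℝ := max (φ t) 0

/-- `φ⁻(t) = -min {0, φ(t)}`. -/
def phiMinus (φ : ℝ → ℝ) (t : ℝ) : ℝ := max (-(φ t)) 0

/-- Energy `U(γ) = Σ_{{x,y}⊂γ} φ(|x-y|)` of a finite configuration. -/
def energy (d : ℕ) (φ : ℝ → ℝ) (γ : Finset (Pt d)) : ℝ :=
  (∑ p ∈ γ.offDiag, φ (dist p.1 p.2)) / 2

/-- Interaction energy `W(η;γ) = Σ_{x∈η} Σ_{y∈γ} φ(|x-y|)`. -/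
def interW (d : ℕ) (φ : ℝ → ℝ) (η γ : Finset (Pt d)) : ℝ :=
  ∑ x ∈ η, ∑ y ∈ γ, φ (dist x y)

/-- Number of points of `γ` in the cube `Δ_a(r)`, i.e. `|γ_Δ|`. -/
def cubeCount (d : ℕ) (a : ℝ) (γ : Finset (Pt d)) (r : Fin d → ℤ) : ℕ :=
  (γ.filter fun x => cubeIdx d a x = r).card

/-- `Σ_{Δ ∈ Δ̄_a : |γ_Δ| ≥ 2} |γ_Δ|²`. -/
def densSum (d : ℕ) (a : ℝ) (γ : Finset (Pt d)) : ℝ :=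
  ∑ r ∈ γ.image (cubeIdx d a),
    if 2 ≤ cubeCount d a γ r then (cubeCount d a γ r : ℝ) ^ 2 else 0

/-- `b(a) = inf {φ⁺(|x-y|) : x ≠ y lie in one common cube of Δ̄_a}`. -/
def bVal (d : ℕ) (φ : ℝ → ℝ) (a : ℝ) : ℝ :=
  sInf {t : ℝ | ∃ x y : Pt d, x ≠ y ∧ cubeIdx d a x = cubeIdx d a y ∧ t = phiPlus φ (dist x y)}

/-- `v₀(a) = Σ_{Δ'∈Δ̄_a} sup_{x∈Δ₀} sup_{y∈Δ'} φ⁻(|x-y|)` (valued in `ℝ≥0∞`). -/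
def v0E (d : ℕ) (φ : ℝ → ℝ) (a : ℝ) : ℝ≥0∞ :=
  ∑' r : Fin d → ℤ,
    ⨆ x ∈ {x : Pt d | cubeIdx d a x = 0}, ⨆ y ∈ {y : Pt d | cubeIdx d a y = r},
      ENNReal.ofReal (phiMinus φ (dist x y))

/-- Real value of `v₀(a)`. -/
def v0Val (d : ℕ) (φ : ℝ → ℝ) (a : ℝ) : ℝ := (v0E d φ a).toReal

/-- Assumption (A) on the interaction potential. -/
structure AssumptionA (d : ℕ) (φ : ℝ → ℝ) (r₀ R φ₀ φ₁ ε₀ s : ℝ) : Prop where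
  cont : ContinuousOn φ (Set.Ioi (0 : ℝ))
  r0_pos : 0 < r₀
  R_gt : r₀ < R
  phi0_pos : 0 < φ₀
  phi1_pos : 0 < φ₁
  eps0_pos : 0 < ε₀
  s_ge : (d : ℝ) ≤ s
  decay : ∀ t : ℝ, R ≤ t → -(φ₁ / t ^ ((d : ℝ) + ε₀)) ≤ φ t
  core : ∀ t : ℝ, 0 < t → t ≤ r₀ → φ₀ / t ^ s ≤ φ t

/-- `χ₋^a(γ) = 1` iff no cube of `Δ̄_a` contains two or more points of `γ`. -/
def chiM (d : ℕ) (a : ℝ) (γ : Finset (Pt d)) : ℝ :=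
  if ∀ x ∈ γ, ∀ y ∈ γ, cubeIdx d a x = cubeIdx d a y → x = y then 1 else 0

/-- The finite configuration `{y₁,…,y_n}`. -/
def confOf {d n : ℕ} (y : Fin n → Pt d) : Finset (Pt d) := Finset.image y Finset.univ

/-- Weighted grand partition function `1 + Σ_{n≥1} (zⁿ/n!) ∫_{Λⁿ} e^{-βU({x₁,…,xₙ})} w({x₁,…,xₙ})`. -/
def ZW (d : ℕ) (φ : ℝ → ℝ) (z β : ℝ) (Λ : Set (Pt d)) (w : Finset (Pt d) → ℝ) : ℝ :=
  1 + ∑' n : ℕ, (z ^ (n + 1) / (n + 1).factorial) *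
    ∫ y in {y : Fin (n + 1) → Pt d | ∀ i, y i ∈ Λ},
      Real.exp (-β * energy d φ (confOf y)) * w (confOf y)

/-- Grand partition function `Z_Λ(z,β)`. -/
def ZΛ (d : ℕ) (φ : ℝ → ℝ) (z β : ℝ) (Λ : Set (Pt d)) : ℝ := ZW d φ z β Λ fun _ => 1

/-- Dilute (quasi-lattice approximated) partition function `Z_Λ^{(-)}(z,β,a)`. -/
def ZΛm (d : ℕ) (φ : ℝ → ℝ) (z β a : ℝ) (Λ : Set (Pt d)) : ℝ := ZW d φ z β Λ (chiM d a)

/-- `Σ_{n≥0} (zⁿ/n!) ∫_{Λⁿ} e^{-βU(η∪{y₁,…,y_n})} w(η∪{y₁,…,y_n})`. -/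
def corrInt (d : ℕ) (φ : ℝ → ℝ) (z β : ℝ) (Λ : Set (Pt d)) (η : Finset (Pt d))
    (w : Finset (Pt d) → ℝ) : ℝ :=
  Real.exp (-β * energy d φ η) * w η +
  ∑' n : ℕ, (z ^ (n + 1) / (n + 1).factorial) *
    ∫ y in {y : Fin (n + 1) → Pt d | ∀ i, y i ∈ Λ},
      Real.exp (-β * energy d φ (η ∪ confOf y)) * w (η ∪ confOf y)

/-- Finite-volume correlation function `ρ_Λ(η;z,β)`. -/
def rhoΛ (d : ℕ) (φ : ℝ → ℝ) (z β : ℝ) (Λ : Set (Pt d)) (η : Finset (Pt d)) : ℝ :=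
  z ^ η.card / ZΛ d φ z β Λ * corrInt d φ z β Λ η fun _ => 1

/-- Approximated correlation function `ρ_Λ^{(-)}(η;z,β,a)`. -/
def rhoΛm (d : ℕ) (φ : ℝ → ℝ) (z β a : ℝ) (Λ : Set (Pt d)) (η : Finset (Pt d)) : ℝ :=
  z ^ η.card / ZΛm d φ z β a Λ * corrInt d φ z β Λ η (chiM d a)

/-- `ε₁(a)`. -/
def eps1 (d : ℕ) (φ : ℝ → ℝ) (z β a : ℝ) : ℝ :=
  1/2 * z^2 * a^(2*d) * Real.exp (-β * (bVal d φ a - 5 * v0Val d φ a)) *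
    Real.exp (z * a^d * Real.exp (-β * (bVal d φ a - 3 * v0Val d φ a)))

/-- The cube `[-L/2, L/2)^d`. -/
def boxHalf (d : ℕ) (L : ℝ) : Set (Pt d) := {x | ∀ i, -(L/2) ≤ x i ∧ x i < L/2}

/-- The cube `Λ_l = [-a(l+1/2), a(l+1/2))^d`, a union of cubes of `Δ̄_a`. -/
def boxLat (d : ℕ) (a : ℝ) (l : ℕ) : Set (Pt d) :=
  {x | ∀ i, -(a*(l+1/2)) ≤ x i ∧ x i < a*(l+1/2)}

/-- Proposition 2.1, core estimate.  If `φ⁺(|x-y|) ≥ b` whenever `x ≠ y` lie in one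
common cube of `Δ̄_a`, and `Σ_{Δ'∈Δ̄_a} sup_{y∈Δ'} φ⁻(|x-y|) ≤ v₀` for every `x` (expressed via
finite selections of one point per cube), then every finite configuration `γ` satisfies
`U(γ) ≥ (b/4 - v₀/2)·Σ_{Δ : |γ_Δ|≥2} |γ_Δ|² - (v₀/2)·|γ|`. -/
theorem quasi_lattice_superstability (d : ℕ) (hd : 1 ≤ d) (φ : ℝ → ℝ) (a : ℝ) (ha : 0 < a)
    (b v0 : ℝ) (hb0 : 0 ≤ b) (hv00 : 0 ≤ v0)
    (hb : ∀ x y : Pt d, x ≠ y → cubeIdx d a x = cubeIdx d a y → b ≤ phiPlus φ (dist x y))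
    (hv : ∀ x : Pt d, ∀ S : Finset (Fin d → ℤ), ∀ f : (Fin d → ℤ) → Pt d,
      (∀ r ∈ S, cubeIdx d a (f r) = r) → ∑ r ∈ S, phiMinus φ (dist x (f r)) ≤ v0)
    (γ : Finset (Pt d)) :
    (b / 4 - v0 / 2) * densSum d a γ - v0 / 2 * γ.card ≤ energy d φ γ := by
  classical
  set I := γ.image (cubeIdx d a) with hI
  set n : (Fin d → ℤ) → ℕ := cubeCount d a γ with hn
  have hGr : ∀ r, (γ.filter fun x => cubeIdx d a x = r).card = n r := fun r => rfl
  set w : Pt d → ℝ := fun x => (n (cubeIdx d a x) : ℝ) with hw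
  have hmemfib : ∀ x ∈ γ, x ∈ γ.filter fun z => cubeIdx d a z = cubeIdx d a x := by
    intro x hx; simp [hx]
  have hw1 : ∀ x ∈ γ, 1 ≤ w x := by
    intro x hx
    have hc : 1 ≤ n (cubeIdx d a x) := Finset.card_pos.mpr ⟨x, hmemfib x hx⟩
    have : (1:ℝ) ≤ (n (cubeIdx d a x) : ℝ) := by exact_mod_cast hc
    simpa [hw] using this
  have hfib : ∀ g : Pt d → ℝ,
      ∑ r ∈ I, ∑ x ∈ γ.filter (fun x => cubeIdx d a x = r), g x = ∑ x ∈ γ, g x :=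
    fun g => Finset.sum_fiberwise_of_maps_to (fun x hx => Finset.mem_image_of_mem _ hx) g
  -- sum of fiber cardinalities
  have hsumn : (∑ r ∈ I, (n r : ℝ)) = γ.card := by
    have := hfib (fun _ => (1 : ℝ))
    simpa [Finset.sum_const, nsmul_eq_mul, hGr] using this
  -- sum of weights
  have hsumw : ∑ x ∈ γ, w x = ∑ r ∈ I, (n r : ℝ) ^ 2 := by
    rw [← hfib w]
    refine Finset.sum_congr rfl fun r _ => ?_
    have : ∀ x ∈ γ.filter (fun x => cubeIdx d a x = r), w x = (n r : ℝ) := by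
      intro x hx
      have := (Finset.mem_filter.mp hx).2
      simp [hw, this]
    rw [Finset.sum_congr rfl this, Finset.sum_const, nsmul_eq_mul, hGr]
    ring
  -- the inner bound coming from hv
  have hinner : ∀ x : Pt d, ∑ y ∈ γ, phiMinus φ (dist x y) / w y ≤ v0 := by
    intro x
    set F : (Fin d → ℤ) → Pt d := fun r =>
      if h : (γ.filter fun z => cubeIdx d a z = r).Nonempty then
        (Finset.exists_max_image _ (fun y => phiMinus φ (dist x y)) h).choose
      else x with hF
    have hne : ∀ r ∈ I, (γ.filter fun z => cubeIdx d a z = r).Nonempty := by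
      intro r hr
      obtain ⟨x0, hx0, hx0'⟩ := Finset.mem_image.mp hr
      exact ⟨x0, Finset.mem_filter.mpr ⟨hx0, hx0'⟩⟩
    have hFmem : ∀ r ∈ I, F r ∈ γ.filter fun z => cubeIdx d a z = r := by
      intro r hr
      simp only [hF]
      rw [dif_pos (hne r hr)]
      exact (Finset.exists_max_image _ (fun y => phiMinus φ (dist x y)) (hne r hr)).choose_spec.1
    have hFmax : ∀ r ∈ I, ∀ y ∈ γ.filter (fun z => cubeIdx d a z = r),
        phiMinus φ (dist x y) ≤ phiMinus φ (dist x (F r)) := by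
      intro r hr y hy
      have h := (Finset.exists_max_image (γ.filter fun z => cubeIdx d a z = r)
        (fun y => phiMinus φ (dist x y)) (hne r hr)).choose_spec.2
      have : F r = (Finset.exists_max_image _ (fun y => phiMinus φ (dist x y))
          (hne r hr)).choose := by simp only [hF]; rw [dif_pos (hne r hr)]
      rw [this]; exact h y hy
    have hidx : ∀ r ∈ I, cubeIdx d a (F r) = r := by
      intro r hr
      exact (Finset.mem_filter.mp (hFmem r hr)).2
    calc ∑ y ∈ γ, phiMinus φ (dist x y) / w y
        = ∑ r ∈ I, ∑ y ∈ γ.filter (fun z => cubeIdx d a z = r),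
            phiMinus φ (dist x y) / w y := (hfib _).symm
      _ ≤ ∑ r ∈ I, phiMinus φ (dist x (F r)) := by
          refine Finset.sum_le_sum fun r hr => ?_
          have hcardpos : 0 < n r := Finset.card_pos.mpr (hne r hr)
          have step : ∀ y ∈ γ.filter (fun z => cubeIdx d a z = r),
              phiMinus φ (dist x y) / w y ≤ phiMinus φ (dist x (F r)) / (n r : ℝ) := by
            intro y hy
            have hwy : w y = (n r : ℝ) := by
              have := (Finset.mem_filter.mp hy).2
              simp [hw, this]
            rw [hwy]
            have hposr : (0:ℝ) < (n r : ℝ) := by exact_mod_cast hcardpos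
            exact div_le_div_of_nonneg_right (hFmax r hr y hy) (le_of_lt hposr)
          calc ∑ y ∈ γ.filter (fun z => cubeIdx d a z = r), phiMinus φ (dist x y) / w y
              ≤ ∑ _y ∈ γ.filter (fun z => cubeIdx d a z = r),
                  phiMinus φ (dist x (F r)) / (n r : ℝ) := Finset.sum_le_sum step
            _ = (n r : ℝ) * (phiMinus φ (dist x (F r)) / (n r : ℝ)) := by
                rw [Finset.sum_const, nsmul_eq_mul, hGr]
            _ = phiMinus φ (dist x (F r)) := by
                field_simp
      _ ≤ v0 := hv x I F hidx
  -- negative part bound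
  have hminus_nonneg : ∀ t : ℝ, 0 ≤ phiMinus φ t := fun t => le_max_right _ _
  have hneg : ∑ x ∈ γ, ∑ y ∈ γ, phiMinus φ (dist x y) ≤ v0 * ∑ r ∈ I, (n r : ℝ) ^ 2 := by
    have key : ∀ x ∈ γ, ∀ y ∈ γ, 2 * phiMinus φ (dist x y) ≤
        phiMinus φ (dist x y) * (w x / w y) + phiMinus φ (dist x y) * (w y / w x) := by
      intro x hx y hy
      have hx1 := hw1 x hx
      have hy1 := hw1 y hy
      have hxp : (0:ℝ) < w x := by linarith
      have hyp : (0:ℝ) < w y := by linarith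
      have h2 : 2 ≤ w x / w y + w y / w x := by
        rw [div_add_div _ _ (ne_of_gt hyp) (ne_of_gt hxp), le_div_iff₀ (by positivity)]
        nlinarith [sq_nonneg (w x - w y)]
      nlinarith [hminus_nonneg (dist x y)]
    have hswap : ∑ x ∈ γ, ∑ y ∈ γ, phiMinus φ (dist x y) * (w y / w x)
        = ∑ x ∈ γ, ∑ y ∈ γ, phiMinus φ (dist x y) * (w x / w y) := by
      rw [Finset.sum_comm]
      exact Finset.sum_congr rfl fun x _ => Finset.sum_congr rfl fun y _ => by
        rw [dist_comm]
    have hA : ∑ x ∈ γ, ∑ y ∈ γ, phiMinus φ (dist x y) * (w x / w y)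
        ≤ v0 * ∑ r ∈ I, (n r : ℝ) ^ 2 := by
      have hstep : ∀ x ∈ γ, ∑ y ∈ γ, phiMinus φ (dist x y) * (w x / w y) ≤ w x * v0 := by
        intro x hx
        have : ∑ y ∈ γ, phiMinus φ (dist x y) * (w x / w y)
            = w x * ∑ y ∈ γ, phiMinus φ (dist x y) / w y := by
          rw [Finset.mul_sum]
          exact Finset.sum_congr rfl fun y _ => by ring
        rw [this]
        have hwx : 0 ≤ w x := le_trans zero_le_one (hw1 x hx)
        exact mul_le_mul_of_nonneg_left (hinner x) hwx
      calc ∑ x ∈ γ, ∑ y ∈ γ, phiMinus φ (dist x y) * (w x / w y)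
          ≤ ∑ x ∈ γ, w x * v0 := Finset.sum_le_sum hstep
        _ = v0 * ∑ x ∈ γ, w x := by rw [← Finset.sum_mul]; ring
        _ = v0 * ∑ r ∈ I, (n r : ℝ) ^ 2 := by rw [hsumw]
    have h2 : 2 * (∑ x ∈ γ, ∑ y ∈ γ, phiMinus φ (dist x y))
        ≤ 2 * (∑ x ∈ γ, ∑ y ∈ γ, phiMinus φ (dist x y) * (w x / w y)) := by
      calc 2 * (∑ x ∈ γ, ∑ y ∈ γ, phiMinus φ (dist x y))
          = ∑ x ∈ γ, ∑ y ∈ γ, 2 * phiMinus φ (dist x y) := by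
            rw [Finset.mul_sum]
            exact Finset.sum_congr rfl fun x _ => by rw [Finset.mul_sum]
        _ ≤ ∑ x ∈ γ, ∑ y ∈ γ, (phiMinus φ (dist x y) * (w x / w y)
              + phiMinus φ (dist x y) * (w y / w x)) :=
            Finset.sum_le_sum fun x hx => Finset.sum_le_sum fun y hy => key x hx y hy
        _ = ∑ x ∈ γ, ∑ y ∈ γ, phiMinus φ (dist x y) * (w x / w y)
              + ∑ x ∈ γ, ∑ y ∈ γ, phiMinus φ (dist x y) * (w y / w x) := by
            rw [← Finset.sum_add_distrib]
            exact Finset.sum_congr rfl fun x _ => by rw [← Finset.sum_add_distrib]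
        _ = 2 * (∑ x ∈ γ, ∑ y ∈ γ, phiMinus φ (dist x y) * (w x / w y)) := by
            rw [hswap]; ring
    linarith
  -- positive part bound
  have hpos : b / 2 * densSum d a γ ≤ ∑ p ∈ γ.offDiag,
      (if cubeIdx d a p.1 = cubeIdx d a p.2 then phiPlus φ (dist p.1 p.2) else 0) := by
    have hset : γ.offDiag.filter (fun p => cubeIdx d a p.1 = cubeIdx d a p.2)
        = I.biUnion fun r => (γ.filter fun x => cubeIdx d a x = r).offDiag := by
      ext p
      simp only [Finset.mem_filter, Finset.mem_offDiag, Finset.mem_biUnion, Finset.mem_image, hI]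
      constructor
      · rintro ⟨⟨h1, h2, h3⟩, h4⟩
        exact ⟨cubeIdx d a p.1, ⟨p.1, h1, rfl⟩, ⟨h1, rfl⟩, ⟨h2, h4.symm⟩, h3⟩
      · rintro ⟨r, _, ⟨h1, h1'⟩, ⟨h2, h2'⟩, h3⟩
        exact ⟨⟨h1, h2, h3⟩, h1'.trans h2'.symm⟩
    have hdisj : (↑I : Set (Fin d → ℤ)).PairwiseDisjoint
        (fun r => (γ.filter fun x => cubeIdx d a x = r).offDiag) := by
      intro r _ r' _ hne
      show Disjoint ((γ.filter fun x => cubeIdx d a x = r).offDiag)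
        ((γ.filter fun x => cubeIdx d a x = r').offDiag)
      rw [Finset.disjoint_left]
      intro p hp hp'
      have h1 := (Finset.mem_filter.mp (Finset.mem_offDiag.mp hp).1).2
      have h2 := (Finset.mem_filter.mp (Finset.mem_offDiag.mp hp').1).2
      exact hne (h1 ▸ h2 ▸ rfl)
    have hfibbd : ∀ r ∈ I, b / 2 * (if 2 ≤ n r then (n r : ℝ) ^ 2 else 0)
        ≤ ∑ p ∈ (γ.filter fun x => cubeIdx d a x = r).offDiag, phiPlus φ (dist p.1 p.2) := by
      intro r _
      have hcard : (γ.filter fun x => cubeIdx d a x = r).offDiag.card = n r * n r - n r := by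
        rw [Finset.offDiag_card, hGr]
      have hlow : ∀ p ∈ (γ.filter fun x => cubeIdx d a x = r).offDiag,
          b ≤ phiPlus φ (dist p.1 p.2) := by
        intro p hp
        obtain ⟨hp1, hp2, hp3⟩ := Finset.mem_offDiag.mp hp
        have e1 := (Finset.mem_filter.mp hp1).2
        have e2 := (Finset.mem_filter.mp hp2).2
        exact hb p.1 p.2 hp3 (e1.trans e2.symm)
      have hsum : ((n r * n r - n r : ℕ) : ℝ) * b
          ≤ ∑ p ∈ (γ.filter fun x => cubeIdx d a x = r).offDiag, phiPlus φ (dist p.1 p.2) := by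
        have := Finset.card_nsmul_le_sum _ _ b hlow
        rwa [nsmul_eq_mul, hcard] at this
      refine le_trans ?_ hsum
      by_cases h2 : 2 ≤ n r
      · rw [if_pos h2]
        have hle : n r ≤ n r * n r := Nat.le_mul_of_pos_left _ (by omega)
        have hcast : ((n r * n r - n r : ℕ) : ℝ) = (n r : ℝ) ^ 2 - (n r : ℝ) := by
          rw [Nat.cast_sub hle]; push_cast; ring
        rw [hcast]
        have h2r : (2 : ℝ) ≤ (n r : ℝ) := by exact_mod_cast h2
        nlinarith [mul_nonneg hb0 (mul_nonneg (by linarith : (0:ℝ) ≤ (n r:ℝ))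
          (by linarith : (0:ℝ) ≤ (n r:ℝ) - 2))]
      · rw [if_neg h2]
        have : (0:ℝ) ≤ ((n r * n r - n r : ℕ) : ℝ) := by positivity
        nlinarith
    calc b / 2 * densSum d a γ
        = ∑ r ∈ I, b / 2 * (if 2 ≤ n r then (n r : ℝ) ^ 2 else 0) := by
          rw [densSum, Finset.mul_sum]
      _ ≤ ∑ r ∈ I, ∑ p ∈ (γ.filter fun x => cubeIdx d a x = r).offDiag,
            phiPlus φ (dist p.1 p.2) := Finset.sum_le_sum hfibbd
      _ = ∑ p ∈ γ.offDiag.filter (fun p => cubeIdx d a p.1 = cubeIdx d a p.2),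
            phiPlus φ (dist p.1 p.2) := by rw [hset, Finset.sum_biUnion hdisj]
      _ = ∑ p ∈ γ.offDiag,
            (if cubeIdx d a p.1 = cubeIdx d a p.2 then phiPlus φ (dist p.1 p.2) else 0) :=
          Finset.sum_filter _ _
  -- pointwise comparison on offDiag
  have hpoint : ∀ p ∈ γ.offDiag,
      (if cubeIdx d a p.1 = cubeIdx d a p.2 then phiPlus φ (dist p.1 p.2) else 0)
      ≤ φ (dist p.1 p.2) + phiMinus φ (dist p.1 p.2) := by
    intro p _
    set t := dist p.1 p.2
    have hplus : phiPlus φ t ≤ φ t + phiMinus φ t := by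
      simp only [phiPlus, phiMinus]
      rcases le_total (φ t) 0 with h | h
      · rw [max_eq_right h, max_eq_left (by linarith)]; linarith
      · rw [max_eq_left h, max_eq_right (by linarith)]; linarith
    by_cases hc : cubeIdx d a p.1 = cubeIdx d a p.2
    · rw [if_pos hc]; exact hplus
    · rw [if_neg hc]
      have := le_max_left (-(φ t)) 0
      have : -(φ t) ≤ phiMinus φ t := le_max_left _ _
      linarith
  have hmid : ∑ p ∈ γ.offDiag,
      (if cubeIdx d a p.1 = cubeIdx d a p.2 then phiPlus φ (dist p.1 p.2) else 0)
      ≤ ∑ p ∈ γ.offDiag, φ (dist p.1 p.2) + ∑ p ∈ γ.offDiag, phiMinus φ (dist p.1 p.2) := by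
    rw [← Finset.sum_add_distrib]
    exact Finset.sum_le_sum hpoint
  have hsub : ∑ p ∈ γ.offDiag, phiMinus φ (dist p.1 p.2)
      ≤ ∑ p ∈ γ ×ˢ γ, phiMinus φ (dist p.1 p.2) := by
    refine Finset.sum_le_sum_of_subset_of_nonneg ?_ fun p _ _ => hminus_nonneg _
    intro p hp
    have := Finset.mem_offDiag.mp hp
    exact Finset.mem_product.mpr ⟨this.1, this.2.1⟩
  have hprod : ∑ p ∈ γ ×ˢ γ, phiMinus φ (dist p.1 p.2)
      = ∑ x ∈ γ, ∑ y ∈ γ, phiMinus φ (dist x y) := by rw [Finset.sum_product]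
  have hD : ∑ r ∈ I, (n r : ℝ) ^ 2 ≤ densSum d a γ + γ.card := by
    rw [densSum, ← hsumn, ← Finset.sum_add_distrib]
    refine Finset.sum_le_sum fun r _ => ?_
    by_cases h2 : 2 ≤ n r
    · rw [if_pos h2]
      have : (0:ℝ) ≤ (n r : ℝ) := by positivity
      linarith
    · rw [if_neg h2]
      have : n r ≤ 1 := by omega
      have h1 : (n r : ℝ) ≤ 1 := by exact_mod_cast this
      have h0 : (0:ℝ) ≤ (n r : ℝ) := by positivity
      nlinarith
  have hvD : v0 * ∑ r ∈ I, (n r : ℝ) ^ 2 ≤ v0 * (densSum d a γ + γ.card) :=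
    mul_le_mul_of_nonneg_left hD hv00
  rw [energy]
  linarith
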